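/- Let g₁, g₂ : Ω → 𝔻 be nowhere-holomorphic C² functions on an open set Ω ⊆ ℂ satisfying (CP) and (Ge1), let f := −2i·conj(F) and φ := f·(1 + g₁g₂, i(1 − g₁g₂), g₁ − g₂, −i(g₁ + g₂)), and Λ² := 4|f|²(1+|g₁|²)(1+|g₂|²). Then at every point of Ω, (4/Λ²)·φ_z̄ equals the vector (1/((1+|g₁|²)(1+|g₂|²)))·( (1−|g₂|²)Im g₁ + (1−|g₁|²)Im g₂, −[(1−|g₂|²)Re g₁ + (1−|g₁|²)Re g₂], 2 Im(conj(g₁)g₂), −[1 − 2Re(conj(g₁)g₂) + |g₁|²|g₂|²] ) in ℝ⁴. -/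

import Mathlib

open Complex ComplexConjugate

/-- Wirtinger derivative `∂h/∂z = ½(∂h/∂u − i ∂h/∂v)` of a map `h : ℂ → ℂ`. -/
noncomputable def wz (h : ℂ → ℂ) (z : ℂ) : ℂ :=
  (1 / 2) * (fderiv ℝ h z 1 - Complex.I * fderiv ℝ h z Complex.I)

/-- Wirtinger derivative `∂h/∂z̄ = ½(∂h/∂u + i ∂h/∂v)` of a map `h : ℂ → ℂ`. -/
noncomputable def wzb (h : ℂ → ℂ) (z : ℂ) : ℂ :=
  (1 / 2) * (fderiv ℝ h z 1 + Complex.I * fderiv ℝ h z Complex.I)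

/-- Wirtinger derivative `∂x/∂z` of a real-valued map `x : ℂ → ℝ`. -/
noncomputable def wzR (x : ℂ → ℝ) (z : ℂ) : ℂ :=
  (1 / 2) * (((fderiv ℝ x z 1 : ℝ) : ℂ) - Complex.I * ((fderiv ℝ x z Complex.I : ℝ) : ℂ))

/-- The function `F` appearing in the compatibility condition (CP). -/
noncomputable def Ffun (g₁ g₂ : ℂ → ℂ) (z : ℂ) : ℂ :=
  wzb g₁ z / ((1 - g₁ z * conj (g₂ z)) * (1 + (Complex.normSq (g₁ z) : ℂ)))

/-- The compatibility condition (CP) at a point `z`. -/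
def CP (g₁ g₂ : ℂ → ℂ) (z : ℂ) : Prop :=
  Ffun g₁ g₂ z = wzb g₂ z / ((1 - conj (g₁ z) * g₂ z) * (1 + (Complex.normSq (g₂ z) : ℂ)))

/-- The integrability condition (Ge1) at a point `z`. -/
def Ge1 (g₁ g₂ : ℂ → ℂ) (z : ℂ) : Prop :=
  0 = wz (wzb g₁) z
      + (conj (g₂ z) / (1 - g₁ z * conj (g₂ z))
          - conj (g₁ z) / (1 + (Complex.normSq (g₁ z) : ℂ))) * wz g₁ z * wzb g₁ z
      + ((g₁ z + g₂ z) / ((1 - conj (g₁ z) * g₂ z) * (1 + (Complex.normSq (g₁ z) : ℂ))))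
          * (Complex.normSq (wzb g₁ z) : ℂ)

/-- The integrability condition (Ge2) at a point `z`. -/
def Ge2 (g₁ g₂ : ℂ → ℂ) (z : ℂ) : Prop :=
  0 = wz (wzb g₂) z
      + (conj (g₁ z) / (1 - conj (g₁ z) * g₂ z)
          - conj (g₂ z) / (1 + (Complex.normSq (g₂ z) : ℂ))) * wz g₂ z * wzb g₂ z
      + ((g₁ z + g₂ z) / ((1 - g₁ z * conj (g₂ z)) * (1 + (Complex.normSq (g₂ z) : ℂ))))
          * (Complex.normSq (wzb g₂ z) : ℂ)

/-- The function `f := −2i·conj(F)`. -/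
noncomputable def ffun (g₁ g₂ : ℂ → ℂ) (z : ℂ) : ℂ :=
  -2 * Complex.I * conj (Ffun g₁ g₂ z)

/-- The null curve `φ = f·(1 + g₁g₂, i(1 − g₁g₂), g₁ − g₂, −i(g₁ + g₂))`. -/
noncomputable def phi (g₁ g₂ : ℂ → ℂ) (z : ℂ) : Fin 4 → ℂ :=
  ![ffun g₁ g₂ z * (1 + g₁ z * g₂ z),
    ffun g₁ g₂ z * (Complex.I * (1 - g₁ z * g₂ z)),
    ffun g₁ g₂ z * (g₁ z - g₂ z),
    ffun g₁ g₂ z * (-Complex.I * (g₁ z + g₂ z))]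

/-- The conformal factor `Λ² = 4|f|²(1 + |g₁|²)(1 + |g₂|²)`. -/
noncomputable def lamSq (g₁ g₂ : ℂ → ℂ) (z : ℂ) : ℝ :=
  4 * Complex.normSq (ffun g₁ g₂ z) * (1 + Complex.normSq (g₁ z)) * (1 + Complex.normSq (g₂ z))

section WirtLib
variable {u v : ℂ → ℂ} {z : ℂ}

lemma fderiv_conj_apply (hu : DifferentiableAt ℝ u z) (w : ℂ) :
    fderiv ℝ (fun x => conj (u x)) z w = conj (fderiv ℝ u z w) := by
  have h : HasFDerivAt (fun x => conj (u x))
      ((Complex.conjCLE.toContinuousLinearMap).comp (fderiv ℝ u z)) z :=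
    (Complex.conjCLE.toContinuousLinearMap.hasFDerivAt).comp z hu.hasFDerivAt
  rw [h.fderiv]; rfl

lemma diff_conj (hu : DifferentiableAt ℝ u z) :
    DifferentiableAt ℝ (fun x => conj (u x)) z :=
  ((Complex.conjCLE.toContinuousLinearMap.hasFDerivAt).comp z hu.hasFDerivAt).differentiableAt

lemma wz_conj (hu : DifferentiableAt ℝ u z) :
    wz (fun w => conj (u w)) z = conj (wzb u z) := by
  simp only [wz, wzb, fderiv_conj_apply hu, map_mul, map_add, map_sub, map_one, map_ofNat,
    Complex.conj_I, map_div₀]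
  ring

lemma wzb_conj (hu : DifferentiableAt ℝ u z) :
    wzb (fun w => conj (u w)) z = conj (wz u z) := by
  simp only [wz, wzb, fderiv_conj_apply hu, map_mul, map_add, map_sub, map_one, map_ofNat,
    Complex.conj_I, map_div₀]
  ring

lemma wz_mul (hu : DifferentiableAt ℝ u z) (hv : DifferentiableAt ℝ v z) :
    wz (fun w => u w * v w) z = wz u z * v z + u z * wz v z := by
  simp only [wz, fderiv_fun_mul hu hv, ContinuousLinearMap.add_apply,
    ContinuousLinearMap.smul_apply, smul_eq_mul]
  ring

lemma wzb_mul (hu : DifferentiableAt ℝ u z) (hv : DifferentiableAt ℝ v z) :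
    wzb (fun w => u w * v w) z = wzb u z * v z + u z * wzb v z := by
  simp only [wzb, fderiv_fun_mul hu hv, ContinuousLinearMap.add_apply,
    ContinuousLinearMap.smul_apply, smul_eq_mul]
  ring

lemma wz_add (hu : DifferentiableAt ℝ u z) (hv : DifferentiableAt ℝ v z) :
    wz (fun w => u w + v w) z = wz u z + wz v z := by
  simp only [wz, fderiv_fun_add hu hv, ContinuousLinearMap.add_apply]; ring

lemma wzb_add (hu : DifferentiableAt ℝ u z) (hv : DifferentiableAt ℝ v z) :
    wzb (fun w => u w + v w) z = wzb u z + wzb v z := by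
  simp only [wzb, fderiv_fun_add hu hv, ContinuousLinearMap.add_apply]; ring

lemma wz_sub (hu : DifferentiableAt ℝ u z) (hv : DifferentiableAt ℝ v z) :
    wz (fun w => u w - v w) z = wz u z - wz v z := by
  simp only [wz, fderiv_fun_sub hu hv, ContinuousLinearMap.sub_apply]; ring

lemma wzb_sub (hu : DifferentiableAt ℝ u z) (hv : DifferentiableAt ℝ v z) :
    wzb (fun w => u w - v w) z = wzb u z - wzb v z := by
  simp only [wzb, fderiv_fun_sub hu hv, ContinuousLinearMap.sub_apply]; ring

lemma wz_const (c : ℂ) : wz (fun _ => c) z = 0 := by simp [wz]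

lemma wzb_const (c : ℂ) : wzb (fun _ => c) z = 0 := by simp [wzb]

lemma fderiv_comp_holo {H : ℂ → ℂ} {H' : ℂ} (hH : HasDerivAt H H' (u z))
    (hu : DifferentiableAt ℝ u z) (w : ℂ) :
    fderiv ℝ (fun x => H (u x)) z w = H' * fderiv ℝ u z w := by
  have h := (hH.hasFDerivAt.restrictScalars ℝ).comp z hu.hasFDerivAt
  rw [show (fun x => H (u x)) = H ∘ u from rfl, h.fderiv]
  simp [ContinuousLinearMap.smulRight_apply, smul_eq_mul, mul_comm]

lemma diff_comp_holo {H : ℂ → ℂ} {H' : ℂ} (hH : HasDerivAt H H' (u z))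
    (hu : DifferentiableAt ℝ u z) : DifferentiableAt ℝ (fun x => H (u x)) z :=
  ((hH.hasFDerivAt.restrictScalars ℝ).comp z hu.hasFDerivAt).differentiableAt

lemma wz_inv (hu : DifferentiableAt ℝ u z) (h0 : u z ≠ 0) :
    wz (fun w => (u w)⁻¹) z = -((u z)^2)⁻¹ * wz u z := by
  simp only [wz, fderiv_comp_holo (hasDerivAt_inv h0) hu]; ring

lemma diff_inv' (hu : DifferentiableAt ℝ u z) (h0 : u z ≠ 0) :
    DifferentiableAt ℝ (fun w => (u w)⁻¹) z :=
  diff_comp_holo (hasDerivAt_inv h0) hu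

lemma diff_wzb {g : ℂ → ℂ} (hg : ContDiffAt ℝ 2 g z) : DifferentiableAt ℝ (wzb g) z := by
  have h1 : ContDiffAt ℝ 1 (fderiv ℝ g) z := hg.fderiv_right (by norm_num)
  have h2 : DifferentiableAt ℝ (fderiv ℝ g) z := h1.differentiableAt one_ne_zero
  have h3 : DifferentiableAt ℝ (fun w => fderiv ℝ g w 1) z :=
    h2.clm_apply (differentiableAt_const _)
  have h4 : DifferentiableAt ℝ (fun w => fderiv ℝ g w Complex.I) z :=
    h2.clm_apply (differentiableAt_const _)
  exact (differentiableAt_const _).mul (h3.add ((differentiableAt_const _).mul h4))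

lemma ofReal_im_eq (w : ℂ) : ((w.im : ℝ) : ℂ) = (w - conj w) / (2 * Complex.I) := by
  rw [Complex.sub_conj, eq_div_iff (by simp [Complex.I_ne_zero] : (2:ℂ) * Complex.I ≠ 0)]
  push_cast; ring

lemma ofReal_re_eq (w : ℂ) : ((w.re : ℝ) : ℂ) = (w + conj w) / 2 := by
  rw [Complex.add_conj]; push_cast; ring

end WirtLib

set_option maxHeartbeats 2000000 in
/-- **(Step E, the mean curvature vector in terms of the Gauss map).** Under (CP) and
(Ge1), `(4/Λ²)·φ_z̄` equals the real vector
`(1/((1+|g₁|²)(1+|g₂|²)))·((1−|g₂|²)Im g₁ + (1−|g₁|²)Im g₂,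
 −[(1−|g₂|²)Re g₁ + (1−|g₁|²)Re g₂], 2 Im(conj(g₁)g₂),
 −[1 − 2Re(conj(g₁)g₂) + |g₁|²|g₂|²])`. -/
theorem mean_curvature_formula
    (Ω : Set ℂ) (hΩ : IsOpen Ω) (g₁ g₂ : ℂ → ℂ)
    (hg₁ : ContDiffOn ℝ 2 g₁ Ω) (hg₂ : ContDiffOn ℝ 2 g₂ Ω)
    (hd₁ : ∀ z ∈ Ω, ‖g₁ z‖ < 1) (hd₂ : ∀ z ∈ Ω, ‖g₂ z‖ < 1)
    (hnh₁ : ∀ z ∈ Ω, wzb g₁ z ≠ 0) (hnh₂ : ∀ z ∈ Ω, wzb g₂ z ≠ 0)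
    (hCP : ∀ z ∈ Ω, CP g₁ g₂ z)
    (hGe1 : ∀ z ∈ Ω, Ge1 g₁ g₂ z) :
    ∀ z ∈ Ω, ∀ k : Fin 4,
      (4 / (lamSq g₁ g₂ z : ℂ)) * wzb (fun w => phi g₁ g₂ w k) z
        = (((1 / ((1 + Complex.normSq (g₁ z)) * (1 + Complex.normSq (g₂ z))))
            * (![(1 - Complex.normSq (g₂ z)) * (g₁ z).im
                  + (1 - Complex.normSq (g₁ z)) * (g₂ z).im,
                -((1 - Complex.normSq (g₂ z)) * (g₁ z).re
                  + (1 - Complex.normSq (g₁ z)) * (g₂ z).re),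
                2 * (conj (g₁ z) * g₂ z).im,
                -(1 - 2 * (conj (g₁ z) * g₂ z).re
                  + Complex.normSq (g₁ z) * Complex.normSq (g₂ z))] k) : ℝ) : ℂ) := by
  intro z hz k
  -- regularity
  have hca1 : ContDiffAt ℝ 2 g₁ z := hg₁.contDiffAt (hΩ.mem_nhds hz)
  have hca2 : ContDiffAt ℝ 2 g₂ z := hg₂.contDiffAt (hΩ.mem_nhds hz)
  have dg1 : DifferentiableAt ℝ g₁ z := hca1.differentiableAt (by norm_num)
  have dg2 : DifferentiableAt ℝ g₂ z := hca2.differentiableAt (by norm_num)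
  have dw1 : DifferentiableAt ℝ (wzb g₁) z := diff_wzb hca1
  have dcg1 : DifferentiableAt ℝ (fun w => conj (g₁ w)) z := diff_conj dg1
  have dcg2 : DifferentiableAt ℝ (fun w => conj (g₂ w)) z := diff_conj dg2
  -- nonvanishing denominators
  have habs1 := hd₁ z hz
  have habs2 := hd₂ z hz
  have hb : (1 : ℂ) - g₁ z * conj (g₂ z) ≠ 0 := by
    intro h
    have h1 : ‖g₁ z * conj (g₂ z)‖ = 1 := by
      rw [show g₁ z * conj (g₂ z) = 1 from by linear_combination -h]; simp
    rw [norm_mul, Complex.norm_conj] at h1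
    nlinarith [norm_nonneg (g₁ z), norm_nonneg (g₂ z)]
  have hbb : (1 : ℂ) - conj (g₁ z) * g₂ z ≠ 0 := by
    intro h
    have h1 : ‖conj (g₁ z) * g₂ z‖ = 1 := by
      rw [show conj (g₁ z) * g₂ z = 1 from by linear_combination -h]; simp
    rw [norm_mul, Complex.norm_conj] at h1
    nlinarith [norm_nonneg (g₁ z), norm_nonneg (g₂ z)]
  have hc1' : (1 : ℂ) + (Complex.normSq (g₁ z) : ℂ) ≠ 0 := by
    have h1 : ((1 + Complex.normSq (g₁ z) : ℝ) : ℂ) ≠ 0 := by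
      rw [Complex.ofReal_ne_zero]
      nlinarith [Complex.normSq_nonneg (g₁ z)]
    push_cast at h1; exact h1
  have hc2' : (1 : ℂ) + (Complex.normSq (g₂ z) : ℂ) ≠ 0 := by
    have h1 : ((1 + Complex.normSq (g₂ z) : ℝ) : ℂ) ≠ 0 := by
      rw [Complex.ofReal_ne_zero]
      nlinarith [Complex.normSq_nonneg (g₂ z)]
    push_cast at h1; exact h1
  have hc1 : (1 : ℂ) + g₁ z * conj (g₁ z) ≠ 0 := by rw [Complex.mul_conj]; exact hc1'
  have hc2 : (1 : ℂ) + g₂ z * conj (g₂ z) ≠ 0 := by rw [Complex.mul_conj]; exact hc2'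
  have hF0 : Ffun g₁ g₂ z ≠ 0 := by
    unfold Ffun; exact div_ne_zero (hnh₁ z hz) (mul_ne_zero hb hc1')
  have hcF0 : conj (Ffun g₁ g₂ z) ≠ 0 := by
    intro h; apply hF0
    have := congrArg conj h; simpa using this
  -- P and Q in terms of F
  have hP : wzb g₁ z
      = Ffun g₁ g₂ z * ((1 - g₁ z * conj (g₂ z)) * (1 + g₁ z * conj (g₁ z))) := by
    unfold Ffun
    rw [← Complex.mul_conj, div_mul_cancel₀ _ (mul_ne_zero hb hc1)]
  have hQ : wzb g₂ z
      = Ffun g₁ g₂ z * ((1 - conj (g₁ z) * g₂ z) * (1 + g₂ z * conj (g₂ z))) := by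
    have h := hCP z hz
    unfold CP at h
    rw [h, ← Complex.mul_conj, div_mul_cancel₀ _ (mul_ne_zero hbb hc2)]
  have hPc : conj (wzb g₁ z)
      = conj (Ffun g₁ g₂ z) * ((1 - conj (g₁ z) * g₂ z) * (1 + g₁ z * conj (g₁ z))) := by
    rw [hP]
    simp only [map_mul, map_sub, map_add, map_one, Complex.conj_conj]
    ring
  have hQc : conj (wzb g₂ z)
      = conj (Ffun g₁ g₂ z) * ((1 - g₁ z * conj (g₂ z)) * (1 + g₂ z * conj (g₂ z))) := by
    rw [hQ]
    simp only [map_mul, map_sub, map_add, map_one, Complex.conj_conj]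
    ring
  -- Ffun as a product
  have hFf : Ffun g₁ g₂
      = fun w => wzb g₁ w * ((1 - g₁ w * conj (g₂ w)) * (1 + g₁ w * conj (g₁ w)))⁻¹ := by
    funext w
    unfold Ffun
    rw [div_eq_mul_inv, ← Complex.mul_conj]
  -- differentiability of the pieces
  have db : DifferentiableAt ℝ (fun w => (1:ℂ) - g₁ w * conj (g₂ w)) z :=
    (differentiableAt_const _).sub (dg1.mul dcg2)
  have dc : DifferentiableAt ℝ (fun w => (1:ℂ) + g₁ w * conj (g₁ w)) z :=
    (differentiableAt_const _).add (dg1.mul dcg1)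
  have dD : DifferentiableAt ℝ
      (fun w => ((1:ℂ) - g₁ w * conj (g₂ w)) * (1 + g₁ w * conj (g₁ w))) z := db.mul dc
  have hD0 : ((1:ℂ) - g₁ z * conj (g₂ z)) * (1 + g₁ z * conj (g₁ z)) ≠ 0 :=
    mul_ne_zero hb hc1
  have dDinv : DifferentiableAt ℝ
      (fun w => (((1:ℂ) - g₁ w * conj (g₂ w)) * (1 + g₁ w * conj (g₁ w)))⁻¹) z :=
    diff_inv' dD hD0
  have dF : DifferentiableAt ℝ (Ffun g₁ g₂) z := by
    rw [hFf]; exact dw1.mul dDinv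
  have dcF : DifferentiableAt ℝ (fun w => conj (Ffun g₁ g₂ w)) z := diff_conj dF
  have df : DifferentiableAt ℝ (ffun g₁ g₂) z := by
    have : ffun g₁ g₂ = fun w => -2 * Complex.I * conj (Ffun g₁ g₂ w) := rfl
    rw [this]; exact (differentiableAt_const _).mul dcF
  -- wz computations
  have e1 : wz (fun w => wzb g₁ w * (((1:ℂ) - g₁ w * conj (g₂ w)) * (1 + g₁ w * conj (g₁ w)))⁻¹) z
      = wz (wzb g₁) z * (((1:ℂ) - g₁ z * conj (g₂ z)) * (1 + g₁ z * conj (g₁ z)))⁻¹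
        + wzb g₁ z * wz (fun w => (((1:ℂ) - g₁ w * conj (g₂ w)) * (1 + g₁ w * conj (g₁ w)))⁻¹) z :=
    wz_mul dw1 dDinv
  have e2 : wz (fun w => (((1:ℂ) - g₁ w * conj (g₂ w)) * (1 + g₁ w * conj (g₁ w)))⁻¹) z
      = -(((((1:ℂ) - g₁ z * conj (g₂ z)) * (1 + g₁ z * conj (g₁ z))))^2)⁻¹
        * wz (fun w => ((1:ℂ) - g₁ w * conj (g₂ w)) * (1 + g₁ w * conj (g₁ w))) z :=
    wz_inv dD hD0
  have e3 : wz (fun w => ((1:ℂ) - g₁ w * conj (g₂ w)) * (1 + g₁ w * conj (g₁ w))) z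
      = wz (fun w => (1:ℂ) - g₁ w * conj (g₂ w)) z * ((1:ℂ) + g₁ z * conj (g₁ z))
        + ((1:ℂ) - g₁ z * conj (g₂ z)) * wz (fun w => (1:ℂ) + g₁ w * conj (g₁ w)) z :=
    wz_mul db dc
  have e4 : wz (fun w => (1:ℂ) - g₁ w * conj (g₂ w)) z
      = -(wz g₁ z * conj (g₂ z) + g₁ z * conj (wzb g₂ z)) := by
    rw [wz_sub (differentiableAt_const _) (dg1.fun_mul dcg2), wz_const,
      wz_mul dg1 dcg2, wz_conj dg2]
    ring
  have e5 : wz (fun w => (1:ℂ) + g₁ w * conj (g₁ w)) z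
      = wz g₁ z * conj (g₁ z) + g₁ z * conj (wzb g₁ z) := by
    rw [wz_add (differentiableAt_const _) (dg1.fun_mul dcg1), wz_const,
      wz_mul dg1 dcg1, wz_conj dg1]
    ring
  -- Ge1 rearranged
  have hGe := hGe1 z hz
  unfold Ge1 at hGe
  simp only [← Complex.mul_conj] at hGe
  have hW : wz (wzb g₁) z
      = -((conj (g₂ z) / (1 - g₁ z * conj (g₂ z))
            - conj (g₁ z) / (1 + g₁ z * conj (g₁ z))) * wz g₁ z * wzb g₁ z
          + ((g₁ z + g₂ z) / ((1 - conj (g₁ z) * g₂ z) * (1 + g₁ z * conj (g₁ z))))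
            * (wzb g₁ z * conj (wzb g₁ z))) := by
    linear_combination -hGe
  -- the key derivative of F
  have hS : wz (Ffun g₁ g₂) z
      = -(Ffun g₁ g₂ z * conj (Ffun g₁ g₂ z))
        * (g₁ z * (1 - g₂ z * conj (g₂ z)) + g₂ z * (1 - g₁ z * conj (g₁ z))) := by
    conv_lhs => rw [hFf]
    rw [e1, e2, e3, e4, e5, hW, hPc, hQc, hP]
    have hb' : (1:ℂ) - conj (g₂ z) * g₁ z ≠ 0 := by rw [mul_comm]; exact hb
    field_simp [hb, hbb, hc1, hb']
    ring
  -- derivative of f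
  have hwf : wzb (ffun g₁ g₂) z = -2 * Complex.I * conj (wz (Ffun g₁ g₂) z) := by
    have hfE : ffun g₁ g₂ = fun w => -2 * Complex.I * conj (Ffun g₁ g₂ w) := rfl
    rw [hfE]
    have h : wzb (fun w => -2 * Complex.I * conj (Ffun g₁ g₂ w)) z
        = wzb (fun _ => -2 * Complex.I) z * conj (Ffun g₁ g₂ z)
          + (-2 * Complex.I) * wzb (fun w => conj (Ffun g₁ g₂ w)) z :=
      wzb_mul (differentiableAt_const _) dcF
    rw [h, wzb_const, wzb_conj dF]
    ring
  have hfz : ffun g₁ g₂ z = -2 * Complex.I * conj (Ffun g₁ g₂ z) := rfl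
  have hI2 : Complex.I ^ 2 = -1 := Complex.I_sq
  have hI3 : Complex.I ^ 3 = -Complex.I := by rw [pow_succ, Complex.I_sq]; ring
  have hI4 : Complex.I ^ 4 = 1 := by rw [show (4:ℕ) = 2 + 2 from rfl, pow_add, Complex.I_sq]; ring
  have hI5 : Complex.I ^ 5 = Complex.I := by rw [show (5:ℕ) = 4 + 1 from rfl, pow_add, hI4]; ring
  have hI6 : Complex.I ^ 6 = -1 := by rw [show (6:ℕ) = 4 + 2 from rfl, pow_add, hI4, Complex.I_sq]; ring
  -- lamSq in product form
  have hLam : ((lamSq g₁ g₂ z : ℝ) : ℂ)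
      = 16 * (Ffun g₁ g₂ z * conj (Ffun g₁ g₂ z))
        * ((1 + g₁ z * conj (g₁ z)) * (1 + g₂ z * conj (g₂ z))) := by
    unfold lamSq
    push_cast
    rw [← Complex.mul_conj, ← Complex.mul_conj, ← Complex.mul_conj, hfz]
    simp only [map_mul, map_neg, map_ofNat, Complex.conj_conj, Complex.conj_I]
    ring_nf
    simp only [hI2, hI3, hI4, hI5, hI6]
    ring
  have hL0 : ((lamSq g₁ g₂ z : ℝ) : ℂ) ≠ 0 := by
    rw [hLam]
    exact mul_ne_zero (mul_ne_zero (by norm_num) (mul_ne_zero hF0 hcF0)) (mul_ne_zero hc1 hc2)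
  have hc1r : (1 : ℂ) + conj (g₁ z) * g₁ z ≠ 0 := by rw [mul_comm]; exact hc1
  have hc2r : (1 : ℂ) + conj (g₂ z) * g₂ z ≠ 0 := by rw [mul_comm]; exact hc2
  -- the four components
  fin_cases k
  · -- k = 0
    have hphi : (fun w => phi g₁ g₂ w 0) = fun w => ffun g₁ g₂ w * (1 + g₁ w * g₂ w) := by
      funext w; simp [phi]
    rw [show (⟨0, by norm_num⟩ : Fin 4) = 0 from rfl, hphi]
    have dV : DifferentiableAt ℝ (fun w => (1:ℂ) + g₁ w * g₂ w) z :=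
      (differentiableAt_const _).add (dg1.mul dg2)
    have h0 : wzb (fun w => ffun g₁ g₂ w * (1 + g₁ w * g₂ w)) z
        = wzb (ffun g₁ g₂) z * ((1 + g₁ z * g₂ z))
          + ffun g₁ g₂ z * wzb (fun w => (1:ℂ) + g₁ w * g₂ w) z :=
      wzb_mul df dV
    have hV : wzb (fun w => (1:ℂ) + g₁ w * g₂ w) z = wzb g₁ z * g₂ z + g₁ z * wzb g₂ z := by
      rw [wzb_add (differentiableAt_const _) (dg1.fun_mul dg2), wzb_const, wzb_mul dg1 dg2]; ring
    rw [h0, hV, hwf, hS, hP, hQ]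
    rw [div_mul_eq_mul_div, div_eq_iff hL0, hLam, hfz]
    simp only [Matrix.cons_val_zero]
    push_cast
    simp only [← Complex.mul_conj]
    simp only [ofReal_im_eq, ofReal_re_eq]
    simp only [map_mul, map_neg, map_sub, map_add, map_one, map_ofNat, Complex.conj_conj,
      Complex.conj_I]
    field_simp [hc1, hc2, hc1r, hc2r, Complex.I_ne_zero]
    ring_nf
    simp only [hI2, hI3, hI4, hI5, hI6]
    ring
  · -- k = 1
    have hphi : (fun w => phi g₁ g₂ w 1) = fun w => ffun g₁ g₂ w * (Complex.I * (1 - g₁ w * g₂ w)) := by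
      funext w; simp [phi]
    rw [show (⟨1, by norm_num⟩ : Fin 4) = 1 from rfl, hphi]
    have dV : DifferentiableAt ℝ (fun w => Complex.I * (1 - g₁ w * g₂ w)) z :=
      (differentiableAt_const _).mul ((differentiableAt_const _).sub (dg1.mul dg2))
    have h0 : wzb (fun w => ffun g₁ g₂ w * (Complex.I * (1 - g₁ w * g₂ w))) z
        = wzb (ffun g₁ g₂) z * ((Complex.I * (1 - g₁ z * g₂ z)))
          + ffun g₁ g₂ z * wzb (fun w => Complex.I * (1 - g₁ w * g₂ w)) z :=
      wzb_mul df dV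
    have hV : wzb (fun w => Complex.I * (1 - g₁ w * g₂ w)) z = Complex.I * (-(wzb g₁ z * g₂ z + g₁ z * wzb g₂ z)) := by
      rw [wzb_mul (differentiableAt_const _) ((differentiableAt_const _).fun_sub (dg1.fun_mul dg2)),
        wzb_const, wzb_sub (differentiableAt_const _) (dg1.fun_mul dg2), wzb_const,
        wzb_mul dg1 dg2]; ring
    rw [h0, hV, hwf, hS, hP, hQ]
    rw [div_mul_eq_mul_div, div_eq_iff hL0, hLam, hfz]
    simp only [Matrix.cons_val_one, Matrix.head_cons]
    push_cast
    simp only [← Complex.mul_conj]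
    simp only [ofReal_im_eq, ofReal_re_eq]
    simp only [map_mul, map_neg, map_sub, map_add, map_one, map_ofNat, Complex.conj_conj,
      Complex.conj_I]
    field_simp [hc1, hc2, hc1r, hc2r, Complex.I_ne_zero]
    ring_nf
    simp only [hI2, hI3, hI4, hI5, hI6]
    ring
  · -- k = 2
    have hphi : (fun w => phi g₁ g₂ w 2) = fun w => ffun g₁ g₂ w * (g₁ w - g₂ w) := by
      funext w; simp [phi]
    rw [show (⟨2, by norm_num⟩ : Fin 4) = 2 from rfl, hphi]
    have dV : DifferentiableAt ℝ (fun w => g₁ w - g₂ w) z :=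
      dg1.sub dg2
    have h0 : wzb (fun w => ffun g₁ g₂ w * (g₁ w - g₂ w)) z
        = wzb (ffun g₁ g₂) z * ((g₁ z - g₂ z))
          + ffun g₁ g₂ z * wzb (fun w => g₁ w - g₂ w) z :=
      wzb_mul df dV
    have hV : wzb (fun w => g₁ w - g₂ w) z = wzb g₁ z - wzb g₂ z := by
      exact wzb_sub dg1 dg2
    rw [h0, hV, hwf, hS, hP, hQ]
    rw [div_mul_eq_mul_div, div_eq_iff hL0, hLam, hfz]
    simp only [Matrix.cons_val_two, Matrix.tail_cons, Matrix.head_cons]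
    push_cast
    simp only [← Complex.mul_conj]
    simp only [ofReal_im_eq, ofReal_re_eq]
    simp only [map_mul, map_neg, map_sub, map_add, map_one, map_ofNat, Complex.conj_conj,
      Complex.conj_I]
    field_simp [hc1, hc2, hc1r, hc2r, Complex.I_ne_zero]
    ring_nf
    simp only [hI2, hI3, hI4, hI5, hI6]
    ring
  · -- k = 3
    have hphi : (fun w => phi g₁ g₂ w 3) = fun w => ffun g₁ g₂ w * (-Complex.I * (g₁ w + g₂ w)) := by
      funext w; simp [phi]
    rw [show (⟨3, by norm_num⟩ : Fin 4) = 3 from rfl, hphi]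
    have dV : DifferentiableAt ℝ (fun w => -Complex.I * (g₁ w + g₂ w)) z :=
      (differentiableAt_const _).mul (dg1.add dg2)
    have h0 : wzb (fun w => ffun g₁ g₂ w * (-Complex.I * (g₁ w + g₂ w))) z
        = wzb (ffun g₁ g₂) z * ((-Complex.I * (g₁ z + g₂ z)))
          + ffun g₁ g₂ z * wzb (fun w => -Complex.I * (g₁ w + g₂ w)) z :=
      wzb_mul df dV
    have hV : wzb (fun w => -Complex.I * (g₁ w + g₂ w)) z = -Complex.I * (wzb g₁ z + wzb g₂ z) := by
      rw [wzb_mul (differentiableAt_const _) (dg1.fun_add dg2), wzb_const,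
        wzb_add dg1 dg2]; ring
    rw [h0, hV, hwf, hS, hP, hQ]
    rw [div_mul_eq_mul_div, div_eq_iff hL0, hLam, hfz]
    simp only [Matrix.cons_val_three, Matrix.tail_cons, Matrix.head_cons]
    push_cast
    simp only [← Complex.mul_conj]
    simp only [ofReal_im_eq, ofReal_re_eq]
    simp only [map_mul, map_neg, map_sub, map_add, map_one, map_ofNat, Complex.conj_conj,
      Complex.conj_I]
    field_simp [hc1, hc2, hc1r, hc2r, Complex.I_ne_zero]
    ring_nf
    simp only [hI2, hI3, hI4, hI5, hI6]
    ring
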